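/- arXiv:1103.5826 — 2 statements merged into one kernel-verified Lean document; each statement's English description precedes it below -/
import Mathlib

section
/- σ̂(3,2,5) + σ̂(13,2,5) + σ̂(53,2,5) = −168, where σ̂(c1,c2,c3) = S_0(c1,c2,c3) − S_1(c1,c2,c3) + S_2(c1,c2,c3). -/
/-- `S c1 c2 c3 t` counts integer triples `(k1,k2,k3)` with `1 ≤ kj ≤ cj - 1` and
`t < k1/c1 + k2/c2 + k3/c3 < t + 1`. -/
noncomputable def S (c1 c2 c3 t : ℕ) : ℕ :=
  ((Finset.Icc (1 : ℤ) ((c1 : ℤ) - 1) ×ˢ Finset.Icc (1 : ℤ) ((c2 : ℤ) - 1) ×ˢ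
      Finset.Icc (1 : ℤ) ((c3 : ℤ) - 1)).filter
    (fun k => (t : ℚ) < (k.1 : ℚ) / c1 + (k.2.1 : ℚ) / c2 + (k.2.2 : ℚ) / c3 ∧
      (k.1 : ℚ) / c1 + (k.2.1 : ℚ) / c2 + (k.2.2 : ℚ) / c3 < (t : ℚ) + 1)).card

/-- `σ̂(c1,c2,c3) = S_0 - S_1 + S_2`, the signature of the Brieskorn singularity
`x^{c1} + y^{c2} + z^{c3} = 0`. -/
noncomputable def sigmaHat (c1 c2 c3 : ℕ) : ℤ :=
  (S c1 c2 c3 0 : ℤ) - (S c1 c2 c3 1 : ℤ) + (S c1 c2 c3 2 : ℤ)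

/-- Integer-arithmetic version of `S`, suitable for kernel computation. -/
noncomputable def S' (c1 c2 c3 t : ℕ) : ℕ :=
  ((Finset.Icc (1 : ℤ) ((c1 : ℤ) - 1) ×ˢ Finset.Icc (1 : ℤ) ((c2 : ℤ) - 1) ×ˢ
      Finset.Icc (1 : ℤ) ((c3 : ℤ) - 1)).filter
    (fun k => (t : ℤ) * (c1 * c2 * c3) < k.1 * (c2 * c3) + k.2.1 * (c1 * c3) + k.2.2 * (c1 * c2) ∧
      k.1 * (c2 * c3) + k.2.1 * (c1 * c3) + k.2.2 * (c1 * c2) < ((t : ℤ) + 1) * (c1 * c2 * c3))).card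

lemma S_eq (c1 c2 c3 t : ℕ) (h1 : 0 < c1) (h2 : 0 < c2) (h3 : 0 < c3) :
    S c1 c2 c3 t = S' c1 c2 c3 t := by
  unfold S S'
  congr 1
  apply Finset.filter_congr
  rintro ⟨k1, k2, k3⟩ _
  simp only
  have q1 : (0:ℚ) < c1 := by exact_mod_cast h1
  have q2 : (0:ℚ) < c2 := by exact_mod_cast h2
  have q3 : (0:ℚ) < c3 := by exact_mod_cast h3
  have hprod : (0:ℚ) < (c1:ℚ) * c2 * c3 := by positivity
  have key : (k1 : ℚ) / c1 + (k2 : ℚ) / c2 + (k3 : ℚ) / c3 =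
      ((k1 : ℚ) * (c2 * c3) + (k2 : ℚ) * (c1 * c3) + (k3 : ℚ) * (c1 * c2)) / ((c1:ℚ) * c2 * c3) := by
    field_simp
  rw [key, lt_div_iff₀ hprod, div_lt_iff₀ hprod]
  constructor <;> rintro ⟨ha, hb⟩ <;>
    exact ⟨by exact_mod_cast ha, by exact_mod_cast hb⟩

set_option maxRecDepth 100000

theorem signature_z5_g1 :
    sigmaHat 3 2 5 + sigmaHat 13 2 5 + sigmaHat 53 2 5 = -168 := by
  unfold sigmaHat
  rw [S_eq 3 2 5 0, S_eq 3 2 5 1, S_eq 3 2 5 2, S_eq 13 2 5 0, S_eq 13 2 5 1, S_eq 13 2 5 2,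
    S_eq 53 2 5 0, S_eq 53 2 5 1, S_eq 53 2 5 2] <;> norm_num
  decide
end

section
/- 6·σ̂(3,2,1) + 3·σ̂(13,2,2) + σ̂(170,3,6) = −940, where σ̂(c1,c2,c3) = S_0(c1,c2,c3) − S_1(c1,c2,c3) + S_2(c1,c2,c3); here σ̂(3,2,1) = 0 since the index range 1 ≤ k3 ≤ 0 is empty, and σ̂(13,2,2) = −12, so equivalently σ̂(170,3,6) = −904. -/
set_option maxRecDepth 100000 in
lemma S'_vals : S' 3 2 1 0 = 0 ∧ S' 3 2 1 1 = 0 ∧ S' 3 2 1 2 = 0 ∧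
    S' 13 2 2 0 = 0 ∧ S' 13 2 2 1 = 12 ∧ S' 13 2 2 2 = 0 ∧
    S' 170 3 6 0 = 196 ∧ S' 170 3 6 1 = 1296 ∧ S' 170 3 6 2 = 196 := by decide

theorem signature_z6_g3 :
    6 * sigmaHat 3 2 1 + 3 * sigmaHat 13 2 2 + sigmaHat 170 3 6 = -940 ∧
      sigmaHat 3 2 1 = 0 ∧ sigmaHat 13 2 2 = -12 ∧ sigmaHat 170 3 6 = -904 := by
  have e : ∀ t, S 3 2 1 t = S' 3 2 1 t := fun t => S_eq _ _ _ _ (by norm_num) (by norm_num) (by norm_num)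
  have e2 : ∀ t, S 13 2 2 t = S' 13 2 2 t := fun t => S_eq _ _ _ _ (by norm_num) (by norm_num) (by norm_num)
  have e3 : ∀ t, S 170 3 6 t = S' 170 3 6 t := fun t => S_eq _ _ _ _ (by norm_num) (by norm_num) (by norm_num)
  obtain ⟨a1, a2, a3, b1, b2, b3, c1, c2, c3⟩ := S'_vals
  simp only [sigmaHat, e, e2, e3, a1, a2, a3, b1, b2, b3, c1, c2, c3]
  norm_num
end
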